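/- Let G be a finite simple graph with no isolated vertices and n vertices, and define δ_G = min_{uv∈E(G)} 2√(d_u d_v)/(d_u+d_v) and Δ_G = max_{uv∈E(G)} 2√(d_u d_v)/(d_u+d_v). Then n·δ_G/2 ≤ R(G) ≤ n·Δ_G/2. -/

import Mathlib

open Finset

variable {V : Type*}

/-- Randić index: `Σ_{uv∈E} (d_u d_v)^{-1/2}`, written as half a double sum over vertices. -/
noncomputable def randicIndex [Fintype V] (G : SimpleGraph V) [DecidableRel G.Adj] : ℝ :=
  (1 / 2) * ∑ u, ∑ v ∈ G.neighborFinset u,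
    1 / Real.sqrt ((G.degree u : ℝ) * (G.degree v : ℝ))

theorem randic_deltaG_bounds [Fintype V] (G : SimpleGraph V) [DecidableRel G.Adj]
    (hiso : ∀ v : V, 0 < G.degree v) (δG ΔG : ℝ)
    (hδG : IsLeast {x : ℝ | ∃ u v, G.Adj u v ∧
      x = 2 * Real.sqrt ((G.degree u : ℝ) * (G.degree v : ℝ)) /
        ((G.degree u : ℝ) + (G.degree v : ℝ))} δG)
    (hΔG : IsGreatest {x : ℝ | ∃ u v, G.Adj u v ∧
      x = 2 * Real.sqrt ((G.degree u : ℝ) * (G.degree v : ℝ)) /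
        ((G.degree u : ℝ) + (G.degree v : ℝ))} ΔG) :
    (Fintype.card V : ℝ) * δG / 2 ≤ randicIndex G ∧
    randicIndex G ≤ (Fintype.card V : ℝ) * ΔG / 2 := by
  classical
  have hdeg : ∀ u : V, (0:ℝ) < G.degree u := fun u => by exact_mod_cast hiso u
  set n : ℝ := (Fintype.card V : ℝ) with hn
  -- the inner "g" sum over a vertex's neighborhood of 1/d_u equals 1
  have hone : ∀ u : V, ∑ _v ∈ G.neighborFinset u, (1 / (G.degree u : ℝ)) = 1 := by
    intro u
    rw [Finset.sum_const, SimpleGraph.card_neighborFinset_eq_degree, nsmul_eq_mul,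
      mul_one_div, div_self (ne_of_gt (hdeg u))]
  -- sum of the symmetric weights
  have hg : ∑ u, ∑ v ∈ G.neighborFinset u,
      (1 / (G.degree u : ℝ) + 1 / (G.degree v : ℝ)) = 2 * n := by
    have hsplit : ∑ u, ∑ v ∈ G.neighborFinset u,
        (1 / (G.degree u : ℝ) + 1 / (G.degree v : ℝ))
        = (∑ u, ∑ v ∈ G.neighborFinset u, (1 / (G.degree u : ℝ)))
          + ∑ u, ∑ v ∈ G.neighborFinset u, (1 / (G.degree v : ℝ)) := by
      rw [← Finset.sum_add_distrib]
      exact Finset.sum_congr rfl fun u _ => Finset.sum_add_distrib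
    have hswap : ∑ u, ∑ v ∈ G.neighborFinset u, (1 / (G.degree v : ℝ))
        = ∑ v, ∑ u ∈ G.neighborFinset v, (1 / (G.degree v : ℝ)) := by
      apply Finset.sum_comm'
      intro x y
      simp [SimpleGraph.mem_neighborFinset, SimpleGraph.adj_comm]
    rw [hsplit, hswap]
    simp only [hone]
    simp [hn]
    ring
  -- the key pointwise identity
  have key : ∀ u v : V, G.Adj u v →
      1 / Real.sqrt ((G.degree u : ℝ) * (G.degree v : ℝ))
      = (2 * Real.sqrt ((G.degree u : ℝ) * (G.degree v : ℝ)) /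
          ((G.degree u : ℝ) + (G.degree v : ℝ))) *
        ((1 / (G.degree u : ℝ) + 1 / (G.degree v : ℝ)) / 2) := by
    intro u v _
    set a : ℝ := (G.degree u : ℝ)
    set b : ℝ := (G.degree v : ℝ)
    have ha := hdeg u
    have hb := hdeg v
    have hs : (0:ℝ) < Real.sqrt (a * b) :=
      Real.sqrt_pos.mpr (mul_pos ha hb)
    have hss : Real.sqrt (a * b) * Real.sqrt (a * b) = a * b :=
      Real.mul_self_sqrt (le_of_lt (mul_pos ha hb))
    have h2 : 1 / Real.sqrt (a * b) = Real.sqrt (a * b) / (a * b) := by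
      rw [div_eq_div_iff hs.ne' (mul_pos ha hb).ne', one_mul, hss]
    rw [h2]
    have hab : a + b ≠ 0 := by positivity
    field_simp
    have ha' : a ≠ 0 := ha.ne'
    have hb' : b ≠ 0 := hb.ne'
    rw [div_add_div _ _ ha' hb']
    ring
  -- nonnegativity of the weight
  have hwnn : ∀ u v : V,
      (0:ℝ) ≤ (1 / (G.degree u : ℝ) + 1 / (G.degree v : ℝ)) / 2 := by
    intro u v
    positivity
  constructor
  · -- lower bound
    have hterm : ∀ u ∈ (Finset.univ : Finset V), ∀ v ∈ G.neighborFinset u,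
        δG * ((1 / (G.degree u : ℝ) + 1 / (G.degree v : ℝ)) / 2)
          ≤ 1 / Real.sqrt ((G.degree u : ℝ) * (G.degree v : ℝ)) := by
      intro u _ v hv
      rw [SimpleGraph.mem_neighborFinset] at hv
      rw [key u v hv]
      exact mul_le_mul_of_nonneg_right (hδG.2 ⟨u, v, hv, rfl⟩) (hwnn u v)
    have hsum : ∑ u, ∑ v ∈ G.neighborFinset u,
        δG * ((1 / (G.degree u : ℝ) + 1 / (G.degree v : ℝ)) / 2)
        ≤ ∑ u, ∑ v ∈ G.neighborFinset u,
          1 / Real.sqrt ((G.degree u : ℝ) * (G.degree v : ℝ)) :=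
      Finset.sum_le_sum fun u hu => Finset.sum_le_sum (hterm u hu)
    have hval : ∑ u, ∑ v ∈ G.neighborFinset u,
        δG * ((1 / (G.degree u : ℝ) + 1 / (G.degree v : ℝ)) / 2) = n * δG := by
      simp only [one_div] at hg
      simp only [div_eq_mul_inv, one_mul, ← Finset.sum_mul, ← Finset.mul_sum]
      rw [hg]
      ring
    rw [randicIndex]
    rw [hval] at hsum
    linarith
  · -- upper bound
    have hterm : ∀ u ∈ (Finset.univ : Finset V), ∀ v ∈ G.neighborFinset u,
        1 / Real.sqrt ((G.degree u : ℝ) * (G.degree v : ℝ))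
          ≤ ΔG * ((1 / (G.degree u : ℝ) + 1 / (G.degree v : ℝ)) / 2) := by
      intro u _ v hv
      rw [SimpleGraph.mem_neighborFinset] at hv
      rw [key u v hv]
      exact mul_le_mul_of_nonneg_right (hΔG.2 ⟨u, v, hv, rfl⟩) (hwnn u v)
    have hsum : ∑ u, ∑ v ∈ G.neighborFinset u,
        1 / Real.sqrt ((G.degree u : ℝ) * (G.degree v : ℝ))
        ≤ ∑ u, ∑ v ∈ G.neighborFinset u,
          ΔG * ((1 / (G.degree u : ℝ) + 1 / (G.degree v : ℝ)) / 2) :=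
      Finset.sum_le_sum fun u hu => Finset.sum_le_sum (hterm u hu)
    have hval : ∑ u, ∑ v ∈ G.neighborFinset u,
        ΔG * ((1 / (G.degree u : ℝ) + 1 / (G.degree v : ℝ)) / 2) = n * ΔG := by
      simp only [one_div] at hg
      simp only [div_eq_mul_inv, one_mul, ← Finset.sum_mul, ← Finset.mul_sum]
      rw [hg]
      ring
    rw [randicIndex]
    rw [hval] at hsum
    linarith
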